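/- Let α ∈ (0,1), β > 0 and γ > 0. The scale density z_γ(x) = exp{(β/(1+αγ)) x^{-(1+αγ)/α}} satisfies ∫₀¹ z_γ(x) dx = +∞ and ∫₁^∞ z_γ(x) dx = +∞, while the speed density m_γ(x) = (1/(2α x^{1+γ})) exp{-(β/(1+αγ)) x^{-(1+αγ)/α}} satisfies ∫₀^∞ m_γ(x) dx < ∞. -/

import Mathlib

open Real MeasureTheory Set

/-- Boundary/integrability properties of the scale density
`z_γ(x) = exp{(β/(1+αγ)) x^{-(1+αγ)/α}}` and speed density
`m_γ(x) = (1/(2α x^{1+γ})) exp{-(β/(1+αγ)) x^{-(1+αγ)/α}}`. -/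
theorem stmt_8 (α β γ : ℝ) (hα : α ∈ Set.Ioo (0:ℝ) 1) (hβ : 0 < β) (hγ : 0 < γ) :
    (∫⁻ x in Set.Ioo (0:ℝ) 1,
      ENNReal.ofReal (Real.exp ((β / (1 + α * γ)) * x ^ (-(1 + α * γ) / α))) = ⊤) ∧
    (∫⁻ x in Set.Ioi (1:ℝ),
      ENNReal.ofReal (Real.exp ((β / (1 + α * γ)) * x ^ (-(1 + α * γ) / α))) = ⊤) ∧
    MeasureTheory.IntegrableOn
      (fun x : ℝ => (1 / (2 * α * x ^ (1 + γ))) *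
        Real.exp (-(β / (1 + α * γ)) * x ^ (-(1 + α * γ) / α)))
      (Set.Ioi 0) := by
  obtain ⟨hα0, hα1⟩ := hα
  set c : ℝ := β / (1 + α * γ) with hc_def
  set q : ℝ := -(1 + α * γ) / α with hq_def
  have h1αγ : (0:ℝ) < 1 + α * γ := by nlinarith
  have hc : 0 < c := div_pos hβ h1αγ
  have hq : q < -1 := by
    rw [hq_def, div_lt_iff₀ hα0, neg_mul]
    nlinarith
  have hq0 : q < 0 := by linarith
  -- Part 1
  have part1 : ∫⁻ x in Set.Ioo (0:ℝ) 1,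
      ENNReal.ofReal (Real.exp (c * x ^ q)) = ⊤ := by
    have hmeas : AEStronglyMeasurable (fun x : ℝ => c * x ^ q)
        (volume.restrict (Set.Ioo (0:ℝ) 1)) :=
      (measurable_const.mul (measurable_id.pow_const q)).aestronglyMeasurable
    have hpos : 0 ≤ᵐ[volume.restrict (Set.Ioo (0:ℝ) 1)] fun x : ℝ => c * x ^ q := by
      filter_upwards [ae_restrict_mem measurableSet_Ioo] with x hx
      have : (0:ℝ) < x ^ q := Real.rpow_pos_of_pos hx.1 q
      positivity
    have hbot : ∫⁻ x in Set.Ioo (0:ℝ) 1, ENNReal.ofReal (c * x ^ q) = ⊤ := by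
      by_contra hne
      have hint : IntegrableOn (fun x : ℝ => c * x ^ q) (Set.Ioo (0:ℝ) 1) :=
        (lintegral_ofReal_ne_top_iff_integrable hmeas hpos).mp hne
      have hint' : IntegrableOn (fun x : ℝ => x ^ q) (Set.Ioo (0:ℝ) 1) := by
        have := hint.const_mul c⁻¹
        simp [← mul_assoc, inv_mul_cancel₀ hc.ne'] at this
        exact this
      rw [intervalIntegral.integrableOn_Ioo_rpow_iff one_pos] at hint'
      linarith
    refine top_le_iff.mp ?_
    rw [← hbot]
    refine lintegral_mono fun x => ENNReal.ofReal_le_ofReal ?_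
    exact le_trans (le_add_of_nonneg_right zero_le_one) (Real.add_one_le_exp _)
  -- Part 2
  have part2 : ∫⁻ x in Set.Ioi (1:ℝ),
      ENNReal.ofReal (Real.exp (c * x ^ q)) = ⊤ := by
    refine top_le_iff.mp ?_
    have h1 : (⊤ : ENNReal) = ∫⁻ (_x : ℝ) in Set.Ioi (1:ℝ), 1 := by
      rw [setLIntegral_one, Real.volume_Ioi]
    rw [h1]
    refine lintegral_mono_ae ?_
    filter_upwards [ae_restrict_mem measurableSet_Ioi] with x hx
    have hx0 : (0:ℝ) < x := lt_trans one_pos hx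
    have : (0:ℝ) ≤ c * x ^ q := by
      have := Real.rpow_pos_of_pos hx0 q
      positivity
    calc (1:ENNReal) = ENNReal.ofReal 1 := by simp
      _ ≤ ENNReal.ofReal (Real.exp (c * x ^ q)) :=
        ENNReal.ofReal_le_ofReal (Real.one_le_exp this)
  -- Part 3
  have hfm : Measurable (fun x : ℝ => (1 / (2 * α * x ^ (1 + γ))) *
      Real.exp (-c * x ^ q)) := by
    refine Measurable.mul ?_ ?_
    · exact measurable_const.div (measurable_const.mul (measurable_id.pow_const (1 + γ)))
    · exact (measurable_const.mul (measurable_id.pow_const q)).exp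
  have part3 : IntegrableOn
      (fun x : ℝ => (1 / (2 * α * x ^ (1 + γ))) * Real.exp (-c * x ^ q))
      (Set.Ioi 0) := by
    have hsplit : Set.Ioc (0:ℝ) 1 ∪ Set.Ioi 1 = Set.Ioi (0:ℝ) :=
      Set.Ioc_union_Ioi_eq_Ioi zero_le_one
    rw [← hsplit]
    refine IntegrableOn.union ?_ ?_
    · -- bounded on (0,1]
      set n : ℕ := ⌈(1 + γ) / (-q)⌉₊ with hn_def
      have hnq : (1 + γ) ≤ (-q) * n := by
        rw [mul_comm, ← div_le_iff₀ (by linarith : (0:ℝ) < -q)]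
        exact Nat.le_ceil _
      refine Measure.integrableOn_of_bounded (M := (n.factorial : ℝ) / (2 * α * c ^ n))
        (by simp [Real.volume_Ioc]) hfm.aestronglyMeasurable ?_
      filter_upwards [ae_restrict_mem measurableSet_Ioc] with x hx
      obtain ⟨hx0, hx1⟩ := hx
      have hxq : (0:ℝ) < x ^ q := Real.rpow_pos_of_pos hx0 q
      have hx1γ : (0:ℝ) < x ^ (1 + γ) := Real.rpow_pos_of_pos hx0 (1 + γ)
      have hkey : ((c * x ^ q) ^ n / (n.factorial : ℝ)) ≤ Real.exp (c * x ^ q) :=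
        Real.pow_div_factorial_le_exp _ (by positivity) n
      have hexpneg : Real.exp (-c * x ^ q) ≤ (n.factorial : ℝ) / (c * x ^ q) ^ n := by
        rw [neg_mul, Real.exp_neg, ← inv_div]
        exact inv_anti₀ (by positivity) hkey
      have hf_le : (1 / (2 * α * x ^ (1 + γ))) * Real.exp (-c * x ^ q) ≤
          (1 / (2 * α * x ^ (1 + γ))) * ((n.factorial : ℝ) / (c * x ^ q) ^ n) := by
        apply mul_le_mul_of_nonneg_left hexpneg (by positivity)
      have hpow : (x ^ q) ^ n = x ^ (q * n) := by
        rw [Real.rpow_mul hx0.le, Real.rpow_natCast]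
      have heq : (1 / (2 * α * x ^ (1 + γ))) * ((n.factorial : ℝ) / (c * x ^ q) ^ n) =
          ((n.factorial : ℝ) / (2 * α * c ^ n)) * x ^ (-(q * n) - (1 + γ)) := by
        rw [mul_pow, hpow, Real.rpow_sub hx0, Real.rpow_neg hx0.le]
        have h1 : x ^ (q * (n:ℝ)) ≠ 0 := (Real.rpow_pos_of_pos hx0 _).ne'
        field_simp
      have hxe : x ^ (-(q * n) - (1 + γ)) ≤ 1 :=
        Real.rpow_le_one hx0.le hx1 (by push_cast; nlinarith)
      have hfx0 : (0:ℝ) ≤ (1 / (2 * α * x ^ (1 + γ))) * Real.exp (-c * x ^ q) := by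
        positivity
      rw [Real.norm_of_nonneg hfx0]
      calc (1 / (2 * α * x ^ (1 + γ))) * Real.exp (-c * x ^ q)
          ≤ (1 / (2 * α * x ^ (1 + γ))) * ((n.factorial : ℝ) / (c * x ^ q) ^ n) := hf_le
        _ = ((n.factorial : ℝ) / (2 * α * c ^ n)) * x ^ (-(q * n) - (1 + γ)) := heq
        _ ≤ ((n.factorial : ℝ) / (2 * α * c ^ n)) * 1 := by
            apply mul_le_mul_of_nonneg_left hxe (by positivity)
        _ = (n.factorial : ℝ) / (2 * α * c ^ n) := mul_one _
    · -- dominated on (1,∞)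
      have hg : IntegrableOn (fun x : ℝ => (1 / (2 * α)) * x ^ (-(1 + γ)))
          (Set.Ioi (1:ℝ)) :=
        (integrableOn_Ioi_rpow_of_lt (by linarith) one_pos).const_mul _
      refine Integrable.mono' hg hfm.aestronglyMeasurable ?_
      filter_upwards [ae_restrict_mem measurableSet_Ioi] with x hx
      have hx0 : (0:ℝ) < x := lt_trans one_pos hx
      have hxq : (0:ℝ) < x ^ q := Real.rpow_pos_of_pos hx0 q
      have hx1γ : (0:ℝ) < x ^ (1 + γ) := Real.rpow_pos_of_pos hx0 (1 + γ)
      have hexp1 : Real.exp (-c * x ^ q) ≤ 1 := by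
        rw [Real.exp_le_one_iff]
        nlinarith
      have hfx0 : (0:ℝ) ≤ (1 / (2 * α * x ^ (1 + γ))) * Real.exp (-c * x ^ q) := by
        positivity
      rw [Real.norm_of_nonneg hfx0]
      calc (1 / (2 * α * x ^ (1 + γ))) * Real.exp (-c * x ^ q)
          ≤ (1 / (2 * α * x ^ (1 + γ))) * 1 :=
            mul_le_mul_of_nonneg_left hexp1 (by positivity)
        _ = (1 / (2 * α)) * x ^ (-(1 + γ)) := by
            rw [Real.rpow_neg hx0.le]
            field_simp
  exact ⟨part1, part2, part3⟩
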